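/- Fix T > 0 and Q ∈ ℝ. Let θ, η : [0,T] → ℝ be continuously differentiable with η(t) > 0 for all t. Let η̄ = min_{t∈[0,T]} η(t) and let θ̄ > 0 be a constant with θ̄ ≥ −θ'(t) for all t ∈ [0,T]; set γ = θ̄/(2η̄) and assume √γ·T < π. Suppose ζ* : [0,T] → ℝ is twice continuously differentiable, satisfies 2η(t)ζ*''(t) + 2η'(t)ζ*'(t) − θ'(t)ζ*(t) = 0 for all t ∈ [0,T], ζ*(0) = Q, and ζ*(T) = 0. Then ζ* is a global maximizer of the cash functional: for every twice continuously differentiable ζ : [0,T] → ℝ with ζ(0) = Q and ζ(T) = 0, C(ζ) ≤ C(ζ*), where C(ζ) = ∫₀ᵀ (θ(t)ζ(t)ζ'(t) − η(t)ζ'(t)²) dt. -/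

import Mathlib

open Set MeasureTheory Real

/-- The cash functional `C(ζ) = ∫₀ᵀ (θ ζ ζ' − η (ζ')²) dt`, expressed via an explicit
derivative function `ζ'`. -/
noncomputable def cash (T : ℝ) (θ η ζ ζ' : ℝ → ℝ) : ℝ :=
  ∫ t in (0:ℝ)..T, (θ t * ζ t * ζ' t - η t * (ζ' t) ^ 2)

private lemma stmt13_aux (a b e e' z z' z'' H H' R ηb γ θb : ℝ)
    (hODEt : (2 * e * z'' + 2 * e' * z' - b * z) * H = 0)
    (key1 : 0 ≤ (θb + b) * H ^ 2)
    (key2 : 0 ≤ (e - ηb) * H' ^ 2)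
    (key3 : 0 ≤ ηb * (H' - R * H) ^ 2)
    (hγη2 : γ * ηb * H ^ 2 = θb / 2 * H ^ 2) :
    a * (z + H) * (z' + H') - e * (z' + H') ^ 2 - (a * z * z' - e * z' ^ 2) ≤
      b * (z * H + H ^ 2 / 2) + a * (z' * H + z * H' + H * H')
      - (2 * e' * z' * H + 2 * e * z'' * H + 2 * e * z' * H')
      - ηb * ((-γ - R ^ 2) * H ^ 2 + R * (2 * H * H')) := by
  nlinarith [key1, key2, key3, hODEt, hγη2]

set_option maxHeartbeats 1600000 in
/-- Under `√γ·T < π` with `γ = θ̄/(2η̄)`, any twice continuously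
differentiable solution `ζ*` of the Euler–Lagrange boundary value problem is a global
maximizer of the cash functional among all C² strategies with the same boundary values. -/
theorem stmt13 (T Q : ℝ) (hT : 0 < T)
    (θ η θ' η' : ℝ → ℝ)
    (hθ : ∀ t ∈ Set.Icc 0 T, HasDerivAt θ (θ' t) t)
    (hθ'c : ContinuousOn θ' (Set.Icc 0 T))
    (hη : ∀ t ∈ Set.Icc 0 T, HasDerivAt η (η' t) t)
    (hη'c : ContinuousOn η' (Set.Icc 0 T))
    (hηpos : ∀ t ∈ Set.Icc 0 T, 0 < η t)
    (ηbar θbar : ℝ)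
    (hηbar : IsLeast (η '' Set.Icc 0 T) ηbar)
    (hθbar : 0 < θbar)
    (hθbar' : ∀ t ∈ Set.Icc 0 T, -θ' t ≤ θbar)
    (hγ : Real.sqrt (θbar / (2 * ηbar)) * T < Real.pi)
    (ζs ζs' ζs'' : ℝ → ℝ)
    (hζs1 : ∀ t ∈ Set.Icc 0 T, HasDerivAt ζs (ζs' t) t)
    (hζs2 : ∀ t ∈ Set.Icc 0 T, HasDerivAt ζs' (ζs'' t) t)
    (hζs''c : ContinuousOn ζs'' (Set.Icc 0 T))
    (hODE : ∀ t ∈ Set.Icc 0 T, 2 * η t * ζs'' t + 2 * η' t * ζs' t - θ' t * ζs t = 0)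
    (hζs0 : ζs 0 = Q) (hζsT : ζs T = 0) :
    ∀ ζ ζ' ζ'' : ℝ → ℝ,
      (∀ t ∈ Set.Icc 0 T, HasDerivAt ζ (ζ' t) t) →
      (∀ t ∈ Set.Icc 0 T, HasDerivAt ζ' (ζ'' t) t) →
      ContinuousOn ζ'' (Set.Icc 0 T) →
      ζ 0 = Q → ζ T = 0 →
      cash T θ η ζ ζ' ≤ cash T θ η ζs ζs' := by
  intro ζ ζ' ζ'' hζ1 hζ2 hζ''c hζ0 hζT
  obtain ⟨⟨t₀, ht₀, hηbar_eq⟩, hηbar_lb⟩ := hηbar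
  have hηbarpos : 0 < ηbar := hηbar_eq ▸ hηpos t₀ ht₀
  have hηle : ∀ t ∈ Set.Icc 0 T, ηbar ≤ η t := fun t ht => hηbar_lb ⟨t, ht, rfl⟩
  set γ : ℝ := θbar / (2 * ηbar) with hγdef
  have hγpos : 0 < γ := div_pos hθbar (by linarith)
  set s : ℝ := Real.sqrt γ with hsdef
  have hspos : 0 < s := Real.sqrt_pos.mpr hγpos
  have hs2 : s ^ 2 = γ := Real.sq_sqrt hγpos.le
  have hγη : γ * ηbar = θbar / 2 := by
    field_simp [hγdef]
    rw [hγdef, div_mul_eq_mul_div, div_mul_eq_mul_div, div_eq_iff (mul_pos two_pos hηbarpos).ne']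
    ring
  -- the test function w and its derivative
  set w : ℝ → ℝ := fun t => Real.cos (s * (t - T / 2)) with hwdef
  set w' : ℝ → ℝ := fun t => -Real.sin (s * (t - T / 2)) * s with hw'def
  have hwpos : ∀ t ∈ Set.Icc 0 T, 0 < w t := by
    intro t ht
    apply Real.cos_pos_of_mem_Ioo
    constructor
    · have h1 : s * (t - T / 2) ≥ -(s * T / 2) := by nlinarith [ht.1, ht.2, hspos]
      have h2 : s * T / 2 < Real.pi / 2 := by linarith [hγ]
      linarith
    · have h1 : s * (t - T / 2) ≤ s * T / 2 := by nlinarith [ht.1, ht.2, hspos]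
      have h2 : s * T / 2 < Real.pi / 2 := by linarith [hγ]
      linarith
  have hu : ∀ t : ℝ, HasDerivAt (fun u => s * (u - T / 2)) s t := by
    intro t
    have := ((hasDerivAt_id t).sub_const (T / 2)).const_mul s
    simpa using this
  have hw : ∀ t : ℝ, HasDerivAt w (w' t) t := by
    intro t
    have := (Real.hasDerivAt_cos (s * (t - T / 2))).comp t (hu t)
    simpa [hwdef, hw'def, Function.comp_def] using this
  have hw' : ∀ t : ℝ, HasDerivAt w' (-(γ * w t)) t := by
    intro t
    have h1 := ((Real.hasDerivAt_sin (s * (t - T / 2))).comp t (hu t)).neg.mul_const s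
    refine h1.congr_deriv ?_
    simp only [hwdef]
    rw [← hs2]
    ring
  set r : ℝ → ℝ := fun t => w' t / w t with hrdef
  have hr : ∀ t ∈ Set.Icc 0 T, HasDerivAt r (-γ - r t ^ 2) t := by
    intro t ht
    have h1 := (hw' t).div (hw t) (hwpos t ht).ne'
    have hwne : w t ≠ 0 := (hwpos t ht).ne'
    refine h1.congr_deriv ?_
    simp only [hrdef]
    field_simp
  -- the difference function and its derivative
  set hf : ℝ → ℝ := fun t => ζ t - ζs t with hfdef
  set hf' : ℝ → ℝ := fun t => ζ' t - ζs' t with hf'def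
  have hhf : ∀ t ∈ Set.Icc 0 T, HasDerivAt hf (hf' t) t :=
    fun t ht => (hζ1 t ht).sub (hζs1 t ht)
  have hf0 : hf 0 = 0 := by simp [hfdef, hζ0, hζs0]
  have hfT : hf T = 0 := by simp [hfdef, hζT, hζsT]
  set g : ℝ → ℝ := fun t =>
    θ t * (ζs t * hf t + hf t ^ 2 / 2) - 2 * η t * ζs' t * hf t - ηbar * (r t * hf t ^ 2)
    with hgdef
  set G : ℝ → ℝ := fun t =>
    (θ' t * (ζs t * hf t + hf t ^ 2 / 2)
      + θ t * (ζs' t * hf t + ζs t * hf' t + hf t * hf' t))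
    - (2 * η' t * ζs' t * hf t + 2 * η t * ζs'' t * hf t + 2 * η t * ζs' t * hf' t)
    - ηbar * ((-γ - r t ^ 2) * hf t ^ 2 + r t * (2 * hf t * hf' t))
    with hGdef
  have hg : ∀ t ∈ Set.Icc 0 T, HasDerivAt g (G t) t := by
    intro t ht
    have h1 : HasDerivAt (fun u => ζs u * hf u + hf u ^ 2 / 2)
        ((ζs' t * hf t + ζs t * hf' t) + ((2 : ℝ) * hf t ^ 1 * hf' t) / 2) t :=
      ((hζs1 t ht).mul (hhf t ht)).add (((hhf t ht).pow 2).div_const 2)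
    have h2 := (hθ t ht).mul h1
    have hη2 : HasDerivAt (fun u => 2 * η u) (2 * η' t) t := (hη t ht).const_mul 2
    have h3 := (hη2.mul (hζs2 t ht)).mul (hhf t ht)
    have h4 := ((hr t ht).mul ((hhf t ht).pow 2)).const_mul ηbar
    have h5 := (h2.sub h3).sub h4
    simp only [hgdef, hGdef]
    refine h5.congr_deriv ?_
    push_cast
    simp only [Pi.mul_apply, Pi.pow_apply]
    ring
  -- continuity facts
  have hcθ : ContinuousOn θ (Set.Icc 0 T) := fun t ht => (hθ t ht).continuousAt.continuousWithinAt
  have hcη : ContinuousOn η (Set.Icc 0 T) := fun t ht => (hη t ht).continuousAt.continuousWithinAt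
  have hcζ : ContinuousOn ζ (Set.Icc 0 T) := fun t ht => (hζ1 t ht).continuousAt.continuousWithinAt
  have hcζ' : ContinuousOn ζ' (Set.Icc 0 T) := fun t ht => (hζ2 t ht).continuousAt.continuousWithinAt
  have hcζs : ContinuousOn ζs (Set.Icc 0 T) := fun t ht => (hζs1 t ht).continuousAt.continuousWithinAt
  have hcζs' : ContinuousOn ζs' (Set.Icc 0 T) := fun t ht => (hζs2 t ht).continuousAt.continuousWithinAt
  have hcarg : Continuous fun t : ℝ => s * (t - T / 2) :=
    continuous_const.mul (continuous_id.sub continuous_const)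
  have hcw : Continuous w := by
    rw [hwdef]; exact Real.continuous_cos.comp hcarg
  have hcw' : Continuous w' := by
    rw [hw'def]; exact ((Real.continuous_sin.comp hcarg).neg).mul continuous_const
  have hcr : ContinuousOn r (Set.Icc 0 T) :=
    hcw'.continuousOn.div hcw.continuousOn (fun t ht => (hwpos t ht).ne')
  clear_value γ s w w' r
  have hchf : ContinuousOn hf (Set.Icc 0 T) := hcζ.sub hcζs
  have hchf' : ContinuousOn hf' (Set.Icc 0 T) := hcζ'.sub hcζs'
  set F : ℝ → ℝ := fun t =>
    (θ t * ζ t * ζ' t - η t * ζ' t ^ 2) - (θ t * ζs t * ζs' t - η t * ζs' t ^ 2)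
    with hFdef
  have hcF : ContinuousOn F (Set.Icc 0 T) := by
    rw [hFdef]
    exact (((hcθ.mul hcζ).mul hcζ').sub (hcη.mul (hcζ'.pow 2))).sub
      (((hcθ.mul hcζs).mul hcζs').sub (hcη.mul (hcζs'.pow 2)))
  have hcG : ContinuousOn G (Set.Icc 0 T) := by
    rw [hGdef]
    apply ContinuousOn.sub
    apply ContinuousOn.sub
    · exact (hθ'c.mul ((hcζs.mul hchf).add ((hchf.pow 2).div_const 2))).add
        (hcθ.mul (((hcζs'.mul hchf).add (hcζs.mul hchf')).add (hchf.mul hchf')))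
    · exact ((((continuousOn_const.mul hη'c).mul hcζs').mul hchf).add
        (((continuousOn_const.mul hcη).mul hζs''c).mul hchf)).add
          (((continuousOn_const.mul hcη).mul hcζs').mul hchf')
    · exact continuousOn_const.mul
        ((((continuousOn_const.sub (hcr.pow 2)).mul (hchf.pow 2))).add
          (hcr.mul ((continuousOn_const.mul hchf).mul hchf')))
  have huIcc : Set.uIcc (0:ℝ) T = Set.Icc 0 T := Set.uIcc_of_le hT.le
  have hiF : IntervalIntegrable F volume 0 T := (huIcc ▸ hcF).intervalIntegrable
  have hiG : IntervalIntegrable G volume 0 T := (huIcc ▸ hcG).intervalIntegrable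
  have hi1 : IntervalIntegrable (fun t => θ t * ζ t * ζ' t - η t * ζ' t ^ 2) volume 0 T := by
    apply ContinuousOn.intervalIntegrable
    rw [huIcc]
    exact ((hcθ.mul hcζ).mul hcζ').sub (hcη.mul (hcζ'.pow 2))
  have hi2 : IntervalIntegrable (fun t => θ t * ζs t * ζs' t - η t * ζs' t ^ 2) volume 0 T := by
    apply ContinuousOn.intervalIntegrable
    rw [huIcc]
    exact ((hcθ.mul hcζs).mul hcζs').sub (hcη.mul (hcζs'.pow 2))
  -- pointwise inequality F ≤ G
  have hFG : ∀ t ∈ Set.Icc 0 T, F t ≤ G t := by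
    intro t ht
    have hODEt : (2 * η t * ζs'' t + 2 * η' t * ζs' t - θ' t * ζs t) * hf t = 0 := by
      rw [hODE t ht, zero_mul]
    have hθ't : 0 ≤ θbar + θ' t := by linarith [hθbar' t ht]
    have hηt : ηbar ≤ η t := hηle t ht
    have key1 : 0 ≤ (θbar + θ' t) * hf t ^ 2 := mul_nonneg hθ't (sq_nonneg _)
    have key2 : 0 ≤ (η t - ηbar) * hf' t ^ 2 := mul_nonneg (by linarith) (sq_nonneg _)
    have key3 : 0 ≤ ηbar * (hf' t - r t * hf t) ^ 2 := mul_nonneg hηbarpos.le (sq_nonneg _)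
    have hγη2 : γ * ηbar * hf t ^ 2 = θbar / 2 * hf t ^ 2 := by rw [hγη]
    have hζe : ζ t = ζs t + hf t := by rw [hfdef]; ring
    have hζ'e : ζ' t = ζs' t + hf' t := by rw [hf'def]; ring
    simp only [hFdef, hGdef]
    rw [hζe, hζ'e]
    have hODEt' : (2 * η t * ζs'' t + 2 * η' t * ζs' t - θ' t * ζs t) * hf t = 0 := hODEt
    exact stmt13_aux (θ t) (θ' t) (η t) (η' t) (ζs t) (ζs' t) (ζs'' t) (hf t) (hf' t) (r t)
      ηbar γ θbar hODEt' key1 key2 key3 hγη2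
  -- integral of G is zero
  have hGint : (∫ t in (0:ℝ)..T, G t) = g T - g 0 :=
    intervalIntegral.integral_eq_sub_of_hasDerivAt
      (fun t ht => hg t (huIcc ▸ ht)) hiG
  have hgT : g T = 0 := by simp only [hgdef]; rw [hfT]; ring
  have hg0 : g 0 = 0 := by simp only [hgdef]; rw [hf0]; ring
  have hGzero : (∫ t in (0:ℝ)..T, G t) = 0 := by rw [hGint, hgT, hg0]; ring
  have hFle : (∫ t in (0:ℝ)..T, F t) ≤ ∫ t in (0:ℝ)..T, G t :=
    intervalIntegral.integral_mono_on hT.le hiF hiG hFG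
  have hdiff : cash T θ η ζ ζ' - cash T θ η ζs ζs' = ∫ t in (0:ℝ)..T, F t := by
    simp only [cash, hFdef]
    rw [← intervalIntegral.integral_sub hi1 hi2]
  rw [hGzero] at hFle
  linarith
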